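/- Let N ≥ 1 and σ > 0. Let C₁ ⊆ ℝ × ℝ^N be nonempty and compact, let L ⊆ ℝ × ℝ^N be nonempty and closed, set ē := e(C₁, L), and assume ē > 0. Let A ⊆ ℝ × ℝ^N and let w : A → ℝ satisfy ē − d^σ_L(p) ≤ w(p) ≤ d^σ_{C₁}(p) for every p ∈ A. Let γ ∈ ℝ and suppose there exists p₀ ∈ A with w(p₀) = γ and d^σ_{C₁}(p₀) + d^σ_L(p₀) = ē. Set Γ := {p ∈ A : w(p) = γ} and Σ := {p ∈ A : w(p) ≤ γ}. Then e(C₁, Γ) = γ and e(Σ, L) = ē − γ, so that e(C₁, Γ) + e(Σ, L) = e(C₁, L). Moreover, for every ρ ≥ 0 with ρ < γ < ē − ρ, every p ∈ Γ satisfies d^σ_{C₁}(p) > ρ and d^σ_L(p) > ρ. -/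
import Mathlib


open Metric Set

/-- The norm `‖(t,x)‖_σ = sqrt(t²/σ² + ‖x‖²)` on `ℝ × ℝ^N`. -/
noncomputable def snormS {N : ℕ} (σ : ℝ) (p : ℝ × EuclideanSpace ℝ (Fin N)) : ℝ :=
  Real.sqrt (p.1 ^ 2 / σ ^ 2 + ‖p.2‖ ^ 2)

/-- The distance function `d^σ_E(p) = inf {‖q - p‖_σ : q ∈ E}`. -/
noncomputable def distS {N : ℕ} (σ : ℝ) (E : Set (ℝ × EuclideanSpace ℝ (Fin N)))
    (p : ℝ × EuclideanSpace ℝ (Fin N)) : ℝ :=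
  sInf {r | ∃ q ∈ E, r = snormS σ (q - p)}

/-- The minimal distance `e(A,B) = inf {‖p - q‖_σ : p ∈ A, q ∈ B}`. -/
noncomputable def eS {N : ℕ} (σ : ℝ) (A B : Set (ℝ × EuclideanSpace ℝ (Fin N))) : ℝ :=
  sInf {r | ∃ p ∈ A, ∃ q ∈ B, r = snormS σ (p - q)}

lemma snormS_nonneg {N : ℕ} (σ : ℝ) (p : ℝ × EuclideanSpace ℝ (Fin N)) :
    0 ≤ snormS σ p := Real.sqrt_nonneg _

lemma snormS_neg {N : ℕ} (σ : ℝ) (p : ℝ × EuclideanSpace ℝ (Fin N)) :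
    snormS σ (-p) = snormS σ p := by
  simp [snormS]

lemma distS_bddBelow {N : ℕ} (σ : ℝ) (E : Set (ℝ × EuclideanSpace ℝ (Fin N)))
    (p : ℝ × EuclideanSpace ℝ (Fin N)) :
    BddBelow {r | ∃ q ∈ E, r = snormS σ (q - p)} :=
  ⟨0, fun r ⟨q, _, hq⟩ => hq ▸ snormS_nonneg σ _⟩

lemma eS_bddBelow {N : ℕ} (σ : ℝ) (A B : Set (ℝ × EuclideanSpace ℝ (Fin N))) :
    BddBelow {r | ∃ p ∈ A, ∃ q ∈ B, r = snormS σ (p - q)} :=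
  ⟨0, fun r ⟨p, _, q, _, h⟩ => h ▸ snormS_nonneg σ _⟩

lemma distS_le {N : ℕ} (σ : ℝ) (E : Set (ℝ × EuclideanSpace ℝ (Fin N)))
    (p q : ℝ × EuclideanSpace ℝ (Fin N)) (hq : q ∈ E) :
    distS σ E p ≤ snormS σ (q - p) :=
  csInf_le (distS_bddBelow σ E p) ⟨q, hq, rfl⟩

theorem stmt5 (N : ℕ) (hN : 1 ≤ N) (σ : ℝ) (hσ : 0 < σ)
    (C₁ L : Set (ℝ × EuclideanSpace ℝ (Fin N)))
    (hC₁ne : C₁.Nonempty) (hC₁cp : IsCompact C₁) (hLne : L.Nonempty) (hLcl : IsClosed L)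
    (ebar : ℝ) (hebar : ebar = eS σ C₁ L) (hepos : 0 < ebar)
    (A : Set (ℝ × EuclideanSpace ℝ (Fin N))) (w : (ℝ × EuclideanSpace ℝ (Fin N)) → ℝ)
    (hw : ∀ p ∈ A, ebar - distS σ L p ≤ w p ∧ w p ≤ distS σ C₁ p)
    (γ : ℝ) (p₀ : ℝ × EuclideanSpace ℝ (Fin N)) (hp₀A : p₀ ∈ A) (hp₀w : w p₀ = γ)
    (hp₀e : distS σ C₁ p₀ + distS σ L p₀ = ebar) :
    eS σ C₁ {p ∈ A | w p = γ} = γ ∧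
    eS σ {p ∈ A | w p ≤ γ} L = ebar - γ ∧
    eS σ C₁ {p ∈ A | w p = γ} + eS σ {p ∈ A | w p ≤ γ} L = eS σ C₁ L ∧
    ∀ ρ : ℝ, 0 ≤ ρ → ρ < γ → γ < ebar - ρ →
      ∀ p ∈ A, w p = γ → ρ < distS σ C₁ p ∧ ρ < distS σ L p := by
  obtain ⟨hw1, hw2⟩ := hw p₀ hp₀A
  have hC1p0 : distS σ C₁ p₀ = γ := by linarith
  have hLp0 : distS σ L p₀ = ebar - γ := by linarith
  have hp₀Γ : p₀ ∈ {p ∈ A | w p = γ} := ⟨hp₀A, hp₀w⟩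
  have hp₀Sig : p₀ ∈ {p ∈ A | w p ≤ γ} := ⟨hp₀A, le_of_eq hp₀w⟩
  obtain ⟨c, hc⟩ := hC₁ne
  obtain ⟨l, hl⟩ := hLne
  -- first equality
  have h1 : eS σ C₁ {p ∈ A | w p = γ} = γ := by
    apply le_antisymm
    · have hne : {r | ∃ q ∈ C₁, r = snormS σ (q - p₀)}.Nonempty :=
        ⟨snormS σ (c - p₀), c, hc, rfl⟩
      have hsub : {r | ∃ q ∈ C₁, r = snormS σ (q - p₀)} ⊆
          {r | ∃ p ∈ C₁, ∃ q ∈ {p ∈ A | w p = γ}, r = snormS σ (p - q)} := by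
        rintro r ⟨q, hq, rfl⟩
        exact ⟨q, hq, p₀, hp₀Γ, rfl⟩
      calc eS σ C₁ {p ∈ A | w p = γ} ≤ distS σ C₁ p₀ :=
            csInf_le_csInf (eS_bddBelow σ _ _) hne hsub
        _ = γ := hC1p0
    · have hne : {r | ∃ p ∈ C₁, ∃ q ∈ {p ∈ A | w p = γ}, r = snormS σ (p - q)}.Nonempty :=
        ⟨snormS σ (c - p₀), c, hc, p₀, hp₀Γ, rfl⟩
      apply le_csInf hne
      rintro r ⟨p, hp, q, ⟨hqA, hqw⟩, rfl⟩
      have h := (hw q hqA).2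
      have hle := distS_le σ C₁ q p hp
      rw [hqw] at h
      linarith
  have h2 : eS σ {p ∈ A | w p ≤ γ} L = ebar - γ := by
    apply le_antisymm
    · have hne : {r | ∃ q ∈ L, r = snormS σ (q - p₀)}.Nonempty :=
        ⟨snormS σ (l - p₀), l, hl, rfl⟩
      have hsub : {r | ∃ q ∈ L, r = snormS σ (q - p₀)} ⊆
          {r | ∃ p ∈ {p ∈ A | w p ≤ γ}, ∃ q ∈ L, r = snormS σ (p - q)} := by
        rintro r ⟨q, hq, rfl⟩
        refine ⟨p₀, hp₀Sig, q, hq, ?_⟩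
        rw [← snormS_neg σ (q - p₀), neg_sub]
      calc eS σ {p ∈ A | w p ≤ γ} L ≤ distS σ L p₀ :=
            csInf_le_csInf (eS_bddBelow σ _ _) hne hsub
        _ = ebar - γ := hLp0
    · have hne : {r | ∃ p ∈ {p ∈ A | w p ≤ γ}, ∃ q ∈ L, r = snormS σ (p - q)}.Nonempty :=
        ⟨snormS σ (p₀ - l), p₀, hp₀Sig, l, hl, rfl⟩
      apply le_csInf hne
      rintro r ⟨p, ⟨hpA, hpw⟩, q, hq, rfl⟩
      have h := (hw p hpA).1
      have hle := distS_le σ L p q hq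
      rw [← neg_sub, snormS_neg] at hle
      linarith
  refine ⟨h1, h2, by rw [h1, h2, ← hebar]; ring, ?_⟩
  intro ρ hρ0 hργ hγe p hpA hwp
  obtain ⟨h3, h4⟩ := hw p hpA
  rw [hwp] at h3 h4
  exact ⟨lt_of_lt_of_le hργ h4, by linarith⟩
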